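/- KL divergence between two Gaussians with means μ_q, μ_p and common variance σ²(1-κ), where μ_q = (1-κ)α_s x + κ(α_s/α_t) z and μ_p = (1-κ)α_s x̂ + κ(α_s/α_t) z, equals (1/2)(SNR(s) - SNR(t))(x - x̂)², where SNR(s) = α_s²/σ_s², SNR(t) = α_t²/σ_t², κ = SNR(t)/SNR(s), and σ² = σ_s². That is, KL(N(μ_q, σ_s²(1-κ)) ‖ N(μ_p, σ_s²(1-κ))) = (1/2)(α_s²/σ_s² - α_t²/σ_t²)(x - x̂)². -/

import Mathlib

open Real MeasureTheory

/-- Gaussian density on `ℝ` with mean `μ` and variance `v`. -/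
noncomputable def gaussPdf (μ v x : ℝ) : ℝ :=
  (Real.sqrt (2 * Real.pi * v))⁻¹ * Real.exp (-(x - μ) ^ 2 / (2 * v))

lemma gaussPdf_pos (μ : ℝ) {v : ℝ} (hv : 0 < v) (x : ℝ) : 0 < gaussPdf μ v x := by
  have : 0 < Real.sqrt (2 * Real.pi * v) :=
    Real.sqrt_pos.2 (by positivity)
  exact mul_pos (inv_pos.2 this) (Real.exp_pos _)

lemma gaussPdf_eq (μ : ℝ) {v : ℝ} (hv : 0 < v) :
    gaussPdf μ v = ProbabilityTheory.gaussianPDFReal μ ⟨v, hv.le⟩ := by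
  funext y
  simp [gaussPdf, ProbabilityTheory.gaussianPDFReal]
  rfl

lemma integral_gaussPdf (μ : ℝ) {v : ℝ} (hv : 0 < v) :
    ∫ y : ℝ, gaussPdf μ v y = 1 := by
  rw [gaussPdf_eq μ hv]
  exact ProbabilityTheory.integral_gaussianPDFReal_eq_one μ
    (fun h => hv.ne' (congrArg Subtype.val h))

lemma integrable_gaussPdf (μ : ℝ) {v : ℝ} (hv : 0 < v) :
    Integrable (gaussPdf μ v) := by
  rw [gaussPdf_eq μ hv]
  exact ProbabilityTheory.integrable_gaussianPDFReal μ _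

lemma integral_odd_gauss {b : ℝ} (hb : 0 < b) :
    ∫ t : ℝ, t * Real.exp (-(b * t ^ 2)) = 0 := by
  have h := MeasureTheory.integral_neg_eq_self
    (fun t : ℝ => t * Real.exp (-(b * t ^ 2))) (volume : Measure ℝ)
  have h1 : (fun x : ℝ => (fun t : ℝ => t * Real.exp (-(b * t ^ 2))) (-x))
      = fun t : ℝ => -(t * Real.exp (-(b * t ^ 2))) := by
    funext t; simp only [neg_sq]; ring
  rw [h1, integral_neg] at h
  linarith

lemma integrable_sub_mul_gaussPdf (μ : ℝ) {v : ℝ} (hv : 0 < v) :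
    Integrable (fun y : ℝ => (y - μ) * gaussPdf μ v y) := by
  have h : (fun y : ℝ => (y - μ) * gaussPdf μ v y)
      = fun y => ((fun t : ℝ => (Real.sqrt (2 * Real.pi * v))⁻¹ *
          (t * Real.exp (-((2 * v)⁻¹) * t ^ 2))) (y - μ)) := by
    funext y
    simp only [gaussPdf]
    rw [neg_div, div_eq_inv_mul, mul_comm ((2 * v)⁻¹) ((y - μ) ^ 2)]
    ring_nf
  rw [h]
  exact ((integrable_mul_exp_neg_mul_sq (by positivity : (0:ℝ) < (2 * v)⁻¹)).const_mul
    _).comp_sub_right μ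

lemma integral_sub_mul_gaussPdf (μ : ℝ) {v : ℝ} (hv : 0 < v) :
    ∫ y : ℝ, (y - μ) * gaussPdf μ v y = 0 := by
  have h : (fun y : ℝ => (y - μ) * gaussPdf μ v y)
      = fun y => ((fun t : ℝ => (Real.sqrt (2 * Real.pi * v))⁻¹ *
          (t * Real.exp (-((2 * v)⁻¹ * t ^ 2)))) (y - μ)) := by
    funext y
    simp only [gaussPdf]
    rw [neg_div, div_eq_inv_mul, mul_comm ((2 * v)⁻¹) ((y - μ) ^ 2)]
    ring_nf
  rw [h, MeasureTheory.integral_sub_right_eq_self (μ := volume)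
      (fun t : ℝ => (Real.sqrt (2 * Real.pi * v))⁻¹ *
        (t * Real.exp (-((2 * v)⁻¹ * t ^ 2)))) μ,
    integral_const_mul, integral_odd_gauss (by positivity : (0:ℝ) < (2 * v)⁻¹), mul_zero]

/-- KL divergence between two Gaussians with equal variance. -/
lemma kl_gauss_same_var (μ₁ μ₂ : ℝ) {v : ℝ} (hv : 0 < v) :
    ∫ y : ℝ, Real.log (gaussPdf μ₁ v y / gaussPdf μ₂ v y) * gaussPdf μ₁ v y
      = (μ₁ - μ₂) ^ 2 / (2 * v) := by
  have hlog : ∀ y : ℝ,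
      Real.log (gaussPdf μ₁ v y / gaussPdf μ₂ v y) * gaussPdf μ₁ v y
        = ((μ₁ - μ₂) / v) * ((y - μ₁) * gaussPdf μ₁ v y)
          + ((μ₁ - μ₂) ^ 2 / (2 * v)) * gaussPdf μ₁ v y := by
    intro y
    have h1 : gaussPdf μ₁ v y / gaussPdf μ₂ v y
        = Real.exp (-(y - μ₁) ^ 2 / (2 * v) - (-(y - μ₂) ^ 2 / (2 * v))) := by
      rw [Real.exp_sub]
      have hc : (0:ℝ) < (Real.sqrt (2 * Real.pi * v))⁻¹ := by
        have : 0 < Real.sqrt (2 * Real.pi * v) := Real.sqrt_pos.2 (by positivity)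
        positivity
      simp only [gaussPdf]
      field_simp
    rw [h1, Real.log_exp]
    have hv' : v ≠ 0 := hv.ne'
    field_simp
    ring
  simp only [hlog]
  rw [MeasureTheory.integral_add
      ((integrable_sub_mul_gaussPdf μ₁ hv).const_mul _)
      ((integrable_gaussPdf μ₁ hv).const_mul _),
    integral_const_mul, integral_const_mul, integral_sub_mul_gaussPdf μ₁ hv,
    integral_gaussPdf μ₁ hv]
  ring

/-- KL divergence between the diffusion-posterior Gaussians with means
`μ_q = (1-κ)α_s x + κ(α_s/α_t) z` and `μ_p = (1-κ)α_s x̂ + κ(α_s/α_t) z`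
and common variance `σ_s²(1-κ)` equals `(1/2)(SNR(s) - SNR(t))(x - x̂)²`. -/
theorem kl_diffusion_posterior (αs αt σs σt x xhat z : ℝ)
    (hαs : 0 < αs) (hαt : 0 < αt) (hσs : 0 < σs) (hσt : 0 < σt)
    (κ : ℝ) (hκdef : κ = (αt ^ 2 / σt ^ 2) / (αs ^ 2 / σs ^ 2)) (hκ0 : 0 < κ) (hκ1 : κ < 1) :
    ∫ y : ℝ,
        Real.log (gaussPdf ((1 - κ) * αs * x + κ * (αs / αt) * z) (σs ^ 2 * (1 - κ)) y
            / gaussPdf ((1 - κ) * αs * xhat + κ * (αs / αt) * z) (σs ^ 2 * (1 - κ)) y)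
          * gaussPdf ((1 - κ) * αs * x + κ * (αs / αt) * z) (σs ^ 2 * (1 - κ)) y
      = (1 / 2) * (αs ^ 2 / σs ^ 2 - αt ^ 2 / σt ^ 2) * (x - xhat) ^ 2 := by
  have hv : 0 < σs ^ 2 * (1 - κ) := mul_pos (by positivity) (by linarith)
  rw [kl_gauss_same_var _ _ hv]
  have hd : ((1 - κ) * αs * x + κ * (αs / αt) * z)
      - ((1 - κ) * αs * xhat + κ * (αs / αt) * z) = (1 - κ) * αs * (x - xhat) := by ring
  rw [hd]
  have hsnr : κ * (αs ^ 2 / σs ^ 2) = αt ^ 2 / σt ^ 2 := by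
    rw [hκdef]; field_simp
  have h1κ : (1 : ℝ) - κ ≠ 0 := by linarith
  rw [← hsnr]
  field_simp
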